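/- The independent entropy-regularized NPG update guarantees, for every t ≥ 0, Φ_τ(π^(t+1)) − Φ_τ(π^(t)) ≥ (1/η − min{√N, 2Φ_max} − τ) · J(π^(t+1), π^(t)). -/

import Mathlib

open Finset

noncomputable section

/-- A probability distribution on a finite action set. -/
def IsDist {A : Type*} [Fintype A] (p : A → ℝ) : Prop :=
  (∀ a, 0 ≤ p a) ∧ ∑ a, p a = 1

/-- Shannon entropy of a distribution. -/
def entropy {A : Type*} [Fintype A] (p : A → ℝ) : ℝ :=
  -∑ a, p a * Real.log (p a)

/-- Kullback-Leibler divergence on a finite set. -/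
def KLdiv {A : Type*} [Fintype A] (p q : A → ℝ) : ℝ :=
  ∑ a, p a * (Real.log (p a) - Real.log (q a))

/-- Jeffrey divergence: the symmetrized KL divergence. -/
def Jdiv {A : Type*} [Fintype A] (p q : A → ℝ) : ℝ :=
  KLdiv p q + KLdiv q p

/-- Joint product distribution induced by a product policy. -/
def jointPmf {N : ℕ} {A : Type*} [Fintype A] (π : Fin N → A → ℝ) :
    (Fin N → A) → ℝ :=
  fun a => ∏ i, π i (a i)

/-- Expectation of `f` under the product policy `π`. -/
def expVal {N : ℕ} {A : Type*} [Fintype A] (π : Fin N → A → ℝ)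
    (f : (Fin N → A) → ℝ) : ℝ :=
  ∑ a, jointPmf π a * f a

/-- Point mass at action `a`. -/
def pmfOf {A : Type*} [DecidableEq A] (a : A) : A → ℝ :=
  fun b => if b = a then 1 else 0

/-- Marginalized utility `r_i^π(a) = E_{a_{-i} ∼ π_{-i}}[u_i(a, a_{-i})]`. -/
def margU {N : ℕ} {A : Type*} [Fintype A] [DecidableEq A]
    (u : Fin N → (Fin N → A) → ℝ) (π : Fin N → A → ℝ) (i : Fin N) (a : A) : ℝ :=
  expVal (Function.update π i (pmfOf a)) (u i)

/-- Entropy-regularized utility `u_{i,τ}(π) = u_i(π) + τ H(π_i)`. -/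
def uReg {N : ℕ} {A : Type*} [Fintype A] (u : Fin N → (Fin N → A) → ℝ) (τ : ℝ)
    (i : Fin N) (π : Fin N → A → ℝ) : ℝ :=
  expVal π (u i) + τ * entropy (π i)

/-- `QRE-gap_τ(π)`. -/
def QREgap {N : ℕ} {A : Type*} [Fintype A] [DecidableEq A]
    (u : Fin N → (Fin N → A) → ℝ) (τ : ℝ) (π : Fin N → A → ℝ) : ℝ :=
  sSup {x | ∃ (i : Fin N) (p : A → ℝ), IsDist p ∧
    x = uReg u τ i (Function.update π i p) - uReg u τ i π}

/-- `NE-gap(π)`. -/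
def NEgap {N : ℕ} {A : Type*} [Fintype A] [DecidableEq A]
    (u : Fin N → (Fin N → A) → ℝ) (π : Fin N → A → ℝ) : ℝ :=
  sSup {x | ∃ (i : Fin N) (p : A → ℝ), IsDist p ∧
    x = expVal (Function.update π i p) (u i) - expVal π (u i)}

/-- Entropy-regularized potential `Φ_τ(π) = Φ(π) + τ ∑_i H(π_i)`. -/
def regPot {N : ℕ} {A : Type*} [Fintype A] (Φ : (Fin N → A) → ℝ) (τ : ℝ)
    (π : Fin N → A → ℝ) : ℝ :=
  expVal π Φ + τ * ∑ i, entropy (π i)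

/-- `Φ` is a potential function for the game with utilities `u`. -/
def IsPotential {N : ℕ} {A : Type*} [Fintype A] [DecidableEq A]
    (u : Fin N → (Fin N → A) → ℝ) (Φ : (Fin N → A) → ℝ) : Prop :=
  ∀ (i : Fin N) (a : Fin N → A) (a' : A),
    u i a - u i (Function.update a i a') = Φ a - Φ (Function.update a i a')

/-- The independent entropy-regularized NPG update rule. -/
def NPGstep {N : ℕ} {A : Type*} [Fintype A] [DecidableEq A]
    (u : Fin N → (Fin N → A) → ℝ) (τ η : ℝ) (π : ℕ → Fin N → A → ℝ) : Prop :=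
  ∀ t i a, π (t+1) i a =
    π t i a ^ (1 - η * τ) * Real.exp (η * margU u (π t) i a) /
      ∑ a', π t i a' ^ (1 - η * τ) * Real.exp (η * margU u (π t) i a')

/-- Best-response policy `π_i^⋆(a) ∝ exp(r_i^π(a)/τ)`. -/
def bestResp {N : ℕ} {A : Type*} [Fintype A] [DecidableEq A]
    (u : Fin N → (Fin N → A) → ℝ) (τ : ℝ) (π : Fin N → A → ℝ) (i : Fin N) :
    A → ℝ :=
  fun a => Real.exp (margU u π i a / τ) / ∑ a', Real.exp (margU u π i a' / τ)

section AuxLemmas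
set_option linter.unusedSectionVars false

variable {N : ℕ} {A : Type*} [Fintype A] [DecidableEq A]

lemma sum_prod_eq (w : Fin N → A → ℝ) :
    ∑ a : Fin N → A, ∏ j, w j (a j) = ∏ j, ∑ b, w j b := by
  rw [Finset.prod_univ_sum (fun _ => univ) w, Fintype.piFinset_univ]

lemma prod_update_split (w : Fin N → A → ℝ) (k : Fin N) (v : A → ℝ) (a : Fin N → A) :
    ∏ j, (Function.update w k v) j (a j)
      = v (a k) * ∏ j ∈ univ.erase k, w j (a j) := by
  rw [← Finset.mul_prod_erase univ _ (mem_univ k)]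
  rw [Function.update_self]
  congr 1
  apply Finset.prod_congr rfl
  intro j hj
  rw [Function.update_of_ne (Finset.ne_of_mem_erase hj)]

lemma sum_coord_expand (v : A → ℝ) (k : Fin N) (X : (Fin N → A) → ℝ) :
    ∑ a : Fin N → A, v (a k) * X a = ∑ b, v b * ∑ a : Fin N → A, pmfOf b (a k) * X a := by
  simp_rw [Finset.mul_sum, ← Finset.sum_comm (s := (univ : Finset (Fin N → A)))]
  apply Finset.sum_congr rfl
  intro a _
  rw [Finset.sum_eq_single (a k)]
  · simp [pmfOf]
  · intro b _ hb
    simp [pmfOf, Ne.symm hb]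
  · simp

lemma sum_pmf_invariant (k : Fin N) (b c : A) (h : (Fin N → A) → ℝ)
    (hh : ∀ a z, h (Function.update a k z) = h a) :
    ∑ a : Fin N → A, pmfOf b (a k) * h a = ∑ a : Fin N → A, pmfOf c (a k) * h a := by
  by_cases hbc : b = c
  · rw [hbc]
  · set s := Equiv.swap b c with hs
    set σ : (Fin N → A) → (Fin N → A) := fun a => Function.update a k (s (a k)) with hσ
    have hσk : ∀ a : Fin N → A, σ a k = s (a k) := fun a => Function.update_self ..
    have hinv : Function.Involutive σ := by
      intro a
      show Function.update (σ a) k (s (σ a k)) = a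
      rw [hσk a, hσ]
      simp only
      rw [Function.update_idem, Equiv.swap_apply_self, Function.update_eq_self]
    have hhσ : ∀ a, h (σ a) = h a := fun a => hh a _
    have key : ∀ x : A, pmfOf b (s x) = pmfOf c x := by
      intro x
      by_cases h1 : x = c
      · subst h1; rw [hs, Equiv.swap_apply_right]; simp [pmfOf]
      · by_cases h2 : x = b
        · subst h2; rw [hs, Equiv.swap_apply_left]; simp [pmfOf, hbc, Ne.symm hbc, h1]
        · rw [hs, Equiv.swap_apply_of_ne_of_ne h2 h1]; simp [pmfOf, h1, h2]
    have := Equiv.sum_comp (Function.Involutive.toPerm σ hinv)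
      (fun a : Fin N → A => pmfOf b (a k) * h a)
    rw [← this]
    apply Finset.sum_congr rfl
    intro a _
    have hperm : (Function.Involutive.toPerm σ hinv) a = σ a := rfl
    simp only [hperm]
    rw [hhσ, hσk, key]

lemma sum_factor_invariant [Nonempty A] (v uu : A → ℝ) (huu : ∑ b, uu b = 1) (k : Fin N)
    (h : (Fin N → A) → ℝ) (hh : ∀ a z, h (Function.update a k z) = h a) :
    ∑ a : Fin N → A, v (a k) * h a
      = (∑ b, v b) * ∑ a : Fin N → A, uu (a k) * h a := by
  classical
  set b₀ := Classical.arbitrary A with hb₀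
  have hK : ∀ b, (∑ a : Fin N → A, pmfOf b (a k) * h a)
      = ∑ a : Fin N → A, pmfOf b₀ (a k) * h a := fun b => sum_pmf_invariant k b b₀ h hh
  have h1 : ∑ a : Fin N → A, v (a k) * h a
      = (∑ b, v b) * ∑ a : Fin N → A, pmfOf b₀ (a k) * h a := by
    rw [sum_coord_expand v k h]
    rw [Finset.sum_mul]
    apply Finset.sum_congr rfl
    intro b _
    rw [hK b]
  have h2 : ∑ a : Fin N → A, uu (a k) * h a
      = ∑ a : Fin N → A, pmfOf b₀ (a k) * h a := by
    rw [sum_coord_expand uu k h]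
    calc ∑ b, uu b * ∑ a : Fin N → A, pmfOf b (a k) * h a
        = ∑ b, uu b * ∑ a : Fin N → A, pmfOf b₀ (a k) * h a := by
          apply Finset.sum_congr rfl; intro b _; rw [hK b]
      _ = (∑ b, uu b) * ∑ a : Fin N → A, pmfOf b₀ (a k) * h a := by rw [Finset.sum_mul]
      _ = _ := by rw [huu, one_mul]
  rw [h1, h2]



section Helpers
variable {N : ℕ} {A : Type*} [Fintype A] [DecidableEq A]

/-- normal form for expVal of an updated policy -/
lemma expVal_update (w : Fin N → A → ℝ) (k : Fin N) (v : A → ℝ) (f : (Fin N → A) → ℝ) :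
    expVal (Function.update w k v) f
      = ∑ a : Fin N → A, v (a k) * ((∏ j ∈ univ.erase k, w j (a j)) * f a) := by
  unfold expVal jointPmf
  apply Finset.sum_congr rfl
  intro a _
  rw [prod_update_split, mul_assoc]

lemma erase_prod_invariant (w : Fin N → A → ℝ) (k : Fin N) (a : Fin N → A) (z : A) :
    (∏ j ∈ univ.erase k, w j (Function.update a k z j)) = ∏ j ∈ univ.erase k, w j (a j) := by
  apply Finset.prod_congr rfl
  intro j hj
  rw [Function.update_of_ne (Finset.ne_of_mem_erase hj)]

/-- expVal with an updated coordinate, expanded over point masses -/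
lemma expVal_update_expand [Nonempty A] (w : Fin N → A → ℝ) (k : Fin N) (v : A → ℝ)
    (f : (Fin N → A) → ℝ) :
    expVal (Function.update w k v) f
      = ∑ b, v b * expVal (Function.update w k (pmfOf b)) f := by
  rw [expVal_update]
  rw [sum_coord_expand v k (fun a => (∏ j ∈ univ.erase k, w j (a j)) * f a)]
  apply Finset.sum_congr rfl
  intro b _
  rw [expVal_update]

/-- the "lift" lemma: if the integrand is k-invariant and the k-th weight sums
    appropriately, replace the k-weight by any normalized one. -/
lemma expVal_update_invariant_factor [Nonempty A] (w : Fin N → A → ℝ) (k : Fin N)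
    (v uu : A → ℝ) (huu : ∑ b, uu b = 1)
    (F : (Fin N → A) → ℝ) (hF : ∀ a z, F (Function.update a k z) = F a) :
    expVal (Function.update w k v) F
      = (∑ b, v b) * expVal (Function.update w k uu) F := by
  rw [expVal_update, expVal_update]
  exact sum_factor_invariant v uu huu k _
    (fun a z => by rw [erase_prod_invariant, hF])

/-- expVal is linear in the integrand (subtraction) -/
lemma expVal_sub (w : Fin N → A → ℝ) (f g : (Fin N → A) → ℝ) :
    expVal w (fun a => f a - g a) = expVal w f - expVal w g := by
  unfold expVal
  rw [← Finset.sum_sub_distrib]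
  apply Finset.sum_congr rfl
  intro a _
  ring

/-- expVal linear in the k-th weight (subtraction) -/
lemma expVal_update_sub (w : Fin N → A → ℝ) (k : Fin N) (v₁ v₂ : A → ℝ)
    (f : (Fin N → A) → ℝ) :
    expVal (Function.update w k (v₁ - v₂)) f
      = expVal (Function.update w k v₁) f - expVal (Function.update w k v₂) f := by
  rw [expVal_update, expVal_update, expVal_update, ← Finset.sum_sub_distrib]
  apply Finset.sum_congr rfl
  intro a _
  have : (v₁ - v₂) (a k) = v₁ (a k) - v₂ (a k) := rfl
  rw [this]; ring

/-- marginalization: integrate a single-coordinate function against a product -/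
lemma sum_prod_coord (w : Fin N → A → ℝ) (k : Fin N) (ℓ : A → ℝ) :
    ∑ a : Fin N → A, (∏ j, w j (a j)) * ℓ (a k)
      = (∑ b, w k b * ℓ b) * ∏ j ∈ univ.erase k, (∑ b, w j b) := by
  have h1 : ∀ a : Fin N → A, (∏ j, w j (a j)) * ℓ (a k)
      = ∏ j, (Function.update w k (fun b => w k b * ℓ b)) j (a j) := by
    intro a
    rw [prod_update_split]
    rw [← Finset.mul_prod_erase univ (fun j => w j (a j)) (mem_univ k)]
    ring
  rw [Finset.sum_congr rfl (fun a _ => h1 a), sum_prod_eq]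
  rw [← Finset.mul_prod_erase univ _ (mem_univ k)]
  rw [Function.update_self]
  congr 1
  apply Finset.prod_congr rfl
  intro j hj
  rw [Function.update_of_ne (Finset.ne_of_mem_erase hj)]

end Helpers

section Analytic

/-- per-site G1 inequality: `(e^y - 1) - y ≤ 2 (e^y - 1) y`. -/
lemma g1_ineq (y : ℝ) : (Real.exp y - 1) - y ≤ 2 * ((Real.exp y - 1) * y) := by
  have h1 : y + 1 ≤ Real.exp y := Real.add_one_le_exp y
  have h2 : (-y) + 1 ≤ Real.exp (-y) := Real.add_one_le_exp (-y)
  have h3 : 0 < Real.exp y := Real.exp_pos y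
  have h4 : (-y + 1) * Real.exp y ≤ 1 := by
    have := mul_le_mul_of_nonneg_right h2 (le_of_lt h3)
    rwa [← Real.exp_add, neg_add_cancel, Real.exp_zero] at this
  rcases le_total 0 y with hy | hy
  · nlinarith [mul_nonneg hy (by linarith : (0:ℝ) ≤ Real.exp y - 1 - y), sq_nonneg y]
  · nlinarith [mul_nonneg (neg_nonneg.2 hy) (by nlinarith : (0:ℝ) ≤ 1 - Real.exp y)]

lemma mul_log_nonneg {x y : ℝ} (hx : 0 < x) (hy : 0 < y) :
    0 ≤ (x - y) * (Real.log x - Real.log y) := by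
  rcases le_total y x with h | h
  · exact mul_nonneg (by linarith) (by simp only [sub_nonneg]; exact Real.log_le_log hy h)
  · have h2 := Real.log_le_log hx h
    have : 0 ≤ (y - x) * (Real.log y - Real.log x) :=
      mul_nonneg (by linarith) (by linarith)
    nlinarith [this]

lemma log_diff_ge {x y : ℝ} (hx : 0 < x) (hy : 0 < y) :
    (x - y) / x ≤ Real.log x - Real.log y := by
  have h := Real.log_le_sub_one_of_pos (show 0 < y / x from div_pos hy hx)
  rw [Real.log_div (ne_of_gt hy) (ne_of_gt hx)] at h
  have : y / x - 1 = -((x - y) / x) := by field_simp; ring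
  rw [this] at h
  linarith

lemma sq_div_max_le {x y : ℝ} (hx : 0 < x) (hy : 0 < y) :
    (x - y)^2 / max x y ≤ (x - y) * (Real.log x - Real.log y) := by
  rcases le_total y x with h | h
  · have hmax : max x y = x := max_eq_left h
    rw [hmax, div_le_iff₀ hx]
    have hthis := log_diff_ge hx hy
    have hLx : x - y ≤ (Real.log x - Real.log y) * x := by
      rw [← div_le_iff₀ hx]; exact hthis
    have hxy : 0 ≤ x - y := by linarith
    nlinarith [mul_le_mul_of_nonneg_left hLx hxy]
  · have hmax : max x y = y := max_eq_right h
    rw [hmax, div_le_iff₀ hy]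
    have hthis := log_diff_ge hy hx
    have hLy : y - x ≤ (Real.log y - Real.log x) * y := by
      rw [← div_le_iff₀ hy]; exact hthis
    have hyx : 0 ≤ y - x := by linarith
    nlinarith [mul_le_mul_of_nonneg_left hLy hyx]

/-- Pinsker-type surrogate: squared L1 ≤ 2 × Jeffrey, for positive distributions. -/
lemma l1_sq_le_two_jeffrey {S : Type*} [Fintype S] (μ ν : S → ℝ)
    (hμ : ∀ s, 0 < μ s) (hν : ∀ s, 0 < ν s)
    (hμ1 : ∑ s, μ s = 1) (hν1 : ∑ s, ν s = 1) :
    (∑ s, |μ s - ν s|)^2 ≤ 2 * ∑ s, (μ s - ν s) * (Real.log (μ s) - Real.log (ν s)) := by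
  classical
  have hmaxpos : ∀ s, 0 < max (μ s) (ν s) := fun s => lt_max_of_lt_left (hμ s)
  have cs := sum_mul_sq_le_sq_mul_sq Finset.univ
    (fun s => Real.sqrt (max (μ s) (ν s)))
    (fun s => |μ s - ν s| / Real.sqrt (max (μ s) (ν s)))
  have heq : ∀ s : S, Real.sqrt (max (μ s) (ν s)) * (|μ s - ν s| / Real.sqrt (max (μ s) (ν s)))
      = |μ s - ν s| := by
    intro s
    rw [mul_div_assoc']
    rw [mul_comm, mul_div_assoc, div_self (ne_of_gt (Real.sqrt_pos.2 (hmaxpos s))), mul_one]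
  rw [Finset.sum_congr rfl (fun s _ => heq s)] at cs
  have h2 : ∀ s : S, (Real.sqrt (max (μ s) (ν s)))^2 = max (μ s) (ν s) := fun s =>
    Real.sq_sqrt (hmaxpos s).le
  have h3 : ∀ s : S, (|μ s - ν s| / Real.sqrt (max (μ s) (ν s)))^2
      = (μ s - ν s)^2 / max (μ s) (ν s) := by
    intro s
    rw [div_pow, sq_abs, h2 s]
  rw [Finset.sum_congr rfl (fun s _ => h2 s), Finset.sum_congr rfl (fun s _ => h3 s)] at cs
  have hsummax : ∑ s, max (μ s) (ν s) ≤ 2 := by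
    calc ∑ s, max (μ s) (ν s) ≤ ∑ s, (μ s + ν s) := by
          apply Finset.sum_le_sum
          intro s _
          exact max_le_add_of_nonneg (hμ s).le (hν s).le
      _ = 2 := by rw [Finset.sum_add_distrib, hμ1, hν1]; norm_num
  have hJ : ∑ s, (μ s - ν s)^2 / max (μ s) (ν s)
      ≤ ∑ s, (μ s - ν s) * (Real.log (μ s) - Real.log (ν s)) :=
    Finset.sum_le_sum (fun s _ => sq_div_max_le (hμ s) (hν s))
  have hq : 0 ≤ ∑ s, (μ s - ν s)^2 / max (μ s) (ν s) := by
    apply Finset.sum_nonneg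
    intro s _
    exact div_nonneg (sq_nonneg _) (hmaxpos s).le
  calc (∑ s, |μ s - ν s|)^2 ≤ (∑ s, max (μ s) (ν s)) * ∑ s, (μ s - ν s)^2 / max (μ s) (ν s) := cs
    _ ≤ 2 * ∑ s, (μ s - ν s)^2 / max (μ s) (ν s) := by
        apply mul_le_mul_of_nonneg_right hsummax hq
    _ ≤ 2 * ∑ s, (μ s - ν s) * (Real.log (μ s) - Real.log (ν s)) := by linarith

/-- Gibbs: KL ≥ 0 for positive distributions, in sum form. -/
lemma gibbs_nonneg {S : Type*} [Fintype S] (μ ν : S → ℝ)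
    (hμ : ∀ s, 0 < μ s) (hν : ∀ s, 0 < ν s)
    (hμ1 : ∑ s, μ s = 1) (hν1 : ∑ s, ν s = 1) :
    0 ≤ ∑ s, μ s * (Real.log (μ s) - Real.log (ν s)) := by
  have h : ∀ s : S, μ s - ν s ≤ μ s * (Real.log (μ s) - Real.log (ν s)) := by
    intro s
    have := log_diff_ge (hμ s) (hν s)
    have h2 := mul_le_mul_of_nonneg_left this (hμ s).le
    rw [mul_div_assoc'] at h2
    rw [mul_comm (μ s), mul_div_assoc, div_self (ne_of_gt (hμ s)), mul_one] at h2
    linarith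
  calc (0:ℝ) = ∑ s, (μ s - ν s) := by rw [Finset.sum_sub_distrib, hμ1, hν1]; ring
    _ ≤ _ := Finset.sum_le_sum (fun s _ => h s)

end Analytic

section Joint
variable {N : ℕ} {A : Type*} [Fintype A] [DecidableEq A]

/-- additivity of the Jeffrey sum over product distributions -/
lemma jeffrey_additivity (w w' : Fin N → A → ℝ)
    (hwpos : ∀ j b, 0 < w j b) (hw1 : ∀ j, ∑ b, w j b = 1)
    (hw'pos : ∀ j b, 0 < w' j b) (hw'1 : ∀ j, ∑ b, w' j b = 1) :
    ∑ a : Fin N → A, (jointPmf w a - jointPmf w' a)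
        * (Real.log (jointPmf w a) - Real.log (jointPmf w' a))
      = ∑ j, ∑ b, (w j b - w' j b) * (Real.log (w j b) - Real.log (w' j b)) := by
  classical
  have hlog : ∀ a : Fin N → A,
      Real.log (jointPmf w a) - Real.log (jointPmf w' a)
        = ∑ j, (Real.log (w j (a j)) - Real.log (w' j (a j))) := by
    intro a
    unfold jointPmf
    rw [Real.log_prod (fun j _ => ne_of_gt (hwpos j (a j))),
      Real.log_prod (fun j _ => ne_of_gt (hw'pos j (a j))),
      Finset.sum_sub_distrib]
  have step1 : ∑ a : Fin N → A, (jointPmf w a - jointPmf w' a)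
        * (Real.log (jointPmf w a) - Real.log (jointPmf w' a))
      = ∑ j, ∑ a : Fin N → A, (jointPmf w a - jointPmf w' a)
          * (Real.log (w j (a j)) - Real.log (w' j (a j))) := by
    rw [Finset.sum_comm]
    apply Finset.sum_congr rfl
    intro a _
    rw [hlog a, Finset.mul_sum]
  rw [step1]
  apply Finset.sum_congr rfl
  intro j _
  have marg : ∀ (v : Fin N → A → ℝ), (∀ i, ∑ b, v i b = 1) →
      ∑ a : Fin N → A, jointPmf v a * (Real.log (w j (a j)) - Real.log (w' j (a j)))
        = ∑ b, v j b * (Real.log (w j b) - Real.log (w' j b)) := by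
    intro v hv
    unfold jointPmf
    rw [sum_prod_coord v j (fun b => Real.log (w j b) - Real.log (w' j b))]
    have : ∏ i ∈ univ.erase j, (∑ b, v i b) = 1 := by
      apply Finset.prod_eq_one
      intro i _
      exact hv i
    rw [this, mul_one]
  have expand : ∑ a : Fin N → A, (jointPmf w a - jointPmf w' a)
        * (Real.log (w j (a j)) - Real.log (w' j (a j)))
      = ∑ a : Fin N → A, jointPmf w a * (Real.log (w j (a j)) - Real.log (w' j (a j)))
        - ∑ a : Fin N → A, jointPmf w' a * (Real.log (w j (a j)) - Real.log (w' j (a j))) := by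
    rw [← Finset.sum_sub_distrib]
    apply Finset.sum_congr rfl
    intro a _
    ring
  rw [expand, marg w hw1, marg w' hw'1, ← Finset.sum_sub_distrib]
  apply Finset.sum_congr rfl
  intro b _
  ring

end Joint








section Extra
variable {A : Type*} [Fintype A] [DecidableEq A]

lemma jeffrey_eq_sum (μ ν : A → ℝ) :
    Jdiv μ ν = ∑ b, (μ b - ν b) * (Real.log (μ b) - Real.log (ν b)) := by
  unfold Jdiv KLdiv
  rw [← Finset.sum_add_distrib]
  apply Finset.sum_congr rfl
  intro b _
  ring

lemma exp_sub_one_mul_self_nonneg (y : ℝ) : 0 ≤ (Real.exp y - 1) * y := by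
  rcases le_total 0 y with h | h
  · have : (1:ℝ) ≤ Real.exp y := Real.one_le_exp h
    exact mul_nonneg (by linarith) h
  · have : Real.exp y ≤ 1 := Real.exp_le_one_iff.mpr h  -- check name
    have h0 : Real.exp y - 1 ≤ 0 := by linarith
    have : 0 ≤ (-(Real.exp y - 1)) * (-y) := mul_nonneg (by linarith) (by linarith)
    nlinarith [this]

end Extra


end AuxLemmas

/-- Performance improvement of the regularized potential under independent NPG. -/
theorem potential_improvement_min
    {N : ℕ} (hN : 0 < N) {A : Type*} [Fintype A] [DecidableEq A] [Nonempty A]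
    (u : Fin N → (Fin N → A) → ℝ) (hu : ∀ i a, 0 ≤ u i a ∧ u i a ≤ 1)
    (Φ : (Fin N → A) → ℝ) (Φmax : ℝ) (hΦ : ∀ a, 0 ≤ Φ a ∧ Φ a ≤ Φmax)
    (hpot : IsPotential u Φ)
    (τ η : ℝ) (hτ : 0 < τ) (hη : 0 < η)
    (π : ℕ → Fin N → A → ℝ)
    (hdist : ∀ i, IsDist (π 0 i)) (hpos : ∀ i a, 0 < π 0 i a)
    (hstep : NPGstep u τ η π) :
    ∀ t : ℕ,
      regPot Φ τ (π (t + 1)) - regPot Φ τ (π t) ≥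
        (1 / η - min (Real.sqrt N) (2 * Φmax) - τ) * Jdiv (jointPmf (π (t + 1))) (jointPmf (π t)) := by
  classical
  -- invariants
  have hinv : ∀ s, (∀ i a, 0 < π s i a) ∧ (∀ i, ∑ a, π s i a = 1) := by
    intro s
    induction s with
    | zero => exact ⟨hpos, fun i => (hdist i).2⟩
    | succ s ih =>
      obtain ⟨hp, hd⟩ := ih
      have hZ : ∀ i, 0 < ∑ a', π s i a' ^ (1 - η * τ) * Real.exp (η * margU u (π s) i a') := by
        intro i
        apply Finset.sum_pos
        · intro a _
          exact mul_pos (Real.rpow_pos_of_pos (hp i a) _) (Real.exp_pos _)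
        · exact Finset.univ_nonempty
      constructor
      · intro i a
        rw [hstep s i a]
        exact div_pos (mul_pos (Real.rpow_pos_of_pos (hp i a) _) (Real.exp_pos _)) (hZ i)
      · intro i
        have : ∀ a, π (s+1) i a = π s i a ^ (1 - η * τ) * Real.exp (η * margU u (π s) i a) /
            ∑ a', π s i a' ^ (1 - η * τ) * Real.exp (η * margU u (π s) i a') :=
          fun a => hstep s i a
        rw [Finset.sum_congr rfl (fun a _ => this a), ← Finset.sum_div,
          div_self (ne_of_gt (hZ i))]
  intro t
  have hstepT := hstep t
  set p : Fin N → A → ℝ := π t with hpdef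
  set q : Fin N → A → ℝ := π (t+1) with hqdef
  obtain ⟨hqpos, hqsum⟩ := hinv (t+1)
  obtain ⟨hppos, hpsum⟩ := hinv t
  set r : Fin N → A → ℝ := fun k b => margU u p k b with hrdef
  set Jk : Fin N → ℝ := fun k =>
    ∑ b, (q k b - p k b) * (Real.log (q k b) - Real.log (p k b)) with hJkdef
  set Jtot : ℝ := ∑ k, Jk k with hJtotdef
  have hJk_nonneg : ∀ k, 0 ≤ Jk k := by
    intro k
    apply Finset.sum_nonneg
    intro b _
    exact mul_log_nonneg (hqpos k b) (hppos k b)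
  have hJtot_nonneg : 0 ≤ Jtot := Finset.sum_nonneg (fun k _ => hJk_nonneg k)
  have hJdiv : Jdiv (jointPmf q) (jointPmf p) = Jtot := by
    rw [jeffrey_eq_sum]
    rw [jeffrey_additivity q p hqpos hqsum hppos hpsum]
  -- the per-site main identity (Step B)
  have hB : ∀ k, (∑ b, (q k b - p k b) * r k b) + τ * (entropy (q k) - entropy (p k))
      = (1/η) * Jk k - τ * KLdiv (q k) (p k) := by
    intro k
    set Z : ℝ := ∑ a', p k a' ^ (1 - η * τ) * Real.exp (η * margU u p k a') with hZdef
    have hZpos : 0 < Z := by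
      apply Finset.sum_pos
      · intro b _
        exact mul_pos (Real.rpow_pos_of_pos (hppos k b) _) (Real.exp_pos _)
      · exact Finset.univ_nonempty
    have hlog : ∀ b, Real.log (q k b)
        = (1 - η * τ) * Real.log (p k b) + η * r k b - Real.log Z := by
      intro b
      rw [hstepT k b]
      rw [Real.log_div (ne_of_gt (mul_pos (Real.rpow_pos_of_pos (hppos k b) _)
          (Real.exp_pos _))) (ne_of_gt hZpos),
        Real.log_mul (ne_of_gt (Real.rpow_pos_of_pos (hppos k b) _)) (Real.exp_ne_zero _),
        Real.log_rpow (hppos k b), Real.log_exp]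
    have hzero : ∑ b, (q k b - p k b) = 0 := by
      rw [Finset.sum_sub_distrib, hqsum k, hpsum k]; ring
    have hsum1 : η * (∑ b, (q k b - p k b) * r k b)
        = Jk k + η * τ * (∑ b, (q k b - p k b) * Real.log (p k b)) := by
      have e1 : ∀ b, η * ((q k b - p k b) * r k b)
          = (q k b - p k b) * (Real.log (q k b) - Real.log (p k b))
            + η * τ * ((q k b - p k b) * Real.log (p k b))
            + (q k b - p k b) * Real.log Z := by
        intro b
        have h := hlog b
        have h2 : η * r k b = Real.log (q k b) - (1 - η * τ) * Real.log (p k b) + Real.log Z := by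
          linarith
        linear_combination (q k b - p k b) * h2
      rw [Finset.mul_sum, Finset.sum_congr rfl (fun b _ => e1 b)]
      rw [Finset.sum_add_distrib, Finset.sum_add_distrib, ← Finset.sum_mul, hzero, zero_mul,
        add_zero, ← Finset.mul_sum, hJkdef]
    have hS1 : (∑ b, (q k b - p k b) * Real.log (p k b))
        = entropy (p k) - entropy (q k) - KLdiv (q k) (p k) := by
      unfold entropy KLdiv
      rw [show -(∑ b, p k b * Real.log (p k b)) - -(∑ b, q k b * Real.log (q k b))
            - (∑ b, q k b * (Real.log (q k b) - Real.log (p k b)))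
          = ((∑ b, q k b * Real.log (q k b)) - ∑ b, p k b * Real.log (p k b))
            - ∑ b, q k b * (Real.log (q k b) - Real.log (p k b)) from by ring]
      rw [← Finset.sum_sub_distrib, ← Finset.sum_sub_distrib]
      apply Finset.sum_congr rfl
      intro b _
      ring
    have hX : (∑ b, (q k b - p k b) * r k b)
        = (1/η) * Jk k + τ * (entropy (p k) - entropy (q k) - KLdiv (q k) (p k)) := by
      have h2 : (∑ b, (q k b - p k b) * r k b)
          = (1/η) * (η * (∑ b, (q k b - p k b) * r k b)) := by
        field_simp
      rw [h2, hsum1, hS1]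
      field_simp
    rw [hX]
    ring
  -- hybrid telescoping
  set Hyb : ℕ → Fin N → A → ℝ := fun m j => if (j:ℕ) < m then q j else p j with hHybdef
  have hHybpos : ∀ m j b, 0 < Hyb m j b := by
    intro m j b
    by_cases h : (j:ℕ) < m
    · simp only [hHybdef, h, ↓reduceIte]; exact hqpos j b
    · simp only [hHybdef, h, ↓reduceIte]; exact hppos j b
  have hHybsum : ∀ m j, ∑ b, Hyb m j b = 1 := by
    intro m j
    by_cases h : (j:ℕ) < m
    · simp only [hHybdef, h, ↓reduceIte]; exact hqsum j
    · simp only [hHybdef, h, ↓reduceIte]; exact hpsum j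
  have htel : ∀ f : (Fin N → A) → ℝ, expVal q f - expVal p f
      = ∑ k : Fin N, expVal (Function.update (Hyb (k:ℕ)) k (q k - p k)) f := by
    intro f
    have hHN : Hyb N = q := by
      funext j b
      simp [hHybdef, j.isLt]
    have hH0 : Hyb 0 = p := by
      funext j b
      simp [hHybdef]
    have hstep2 : ∀ k : Fin N, Hyb ((k:ℕ)+1) = Function.update (Hyb (k:ℕ)) k (q k) := by
      intro k
      funext j
      by_cases hj : j = k
      · subst hj
        rw [Function.update_self]
        simp [hHybdef]
      · rw [Function.update_of_ne hj]
        have hne : (j:ℕ) ≠ (k:ℕ) := fun h => hj (Fin.ext h)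
        by_cases h2 : (j:ℕ) < (k:ℕ)
        · simp [hHybdef, h2, Nat.lt_succ_of_lt h2]
        · simp [hHybdef, h2, show ¬((j:ℕ) < (k:ℕ)+1) by omega]
    have hself : ∀ k : Fin N, Hyb (k:ℕ) = Function.update (Hyb (k:ℕ)) k (p k) := by
      intro k
      have h1 : Hyb (k:ℕ) k = p k := by simp [hHybdef]
      conv_lhs => rw [← Function.update_eq_self k (Hyb (k:ℕ))]
      rw [h1]
    calc expVal q f - expVal p f = expVal (Hyb N) f - expVal (Hyb 0) f := by rw [hHN, hH0]
      _ = ∑ m ∈ range N, (expVal (Hyb (m+1)) f - expVal (Hyb m) f) :=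
          (Finset.sum_range_sub (fun m => expVal (Hyb m) f) N).symm
      _ = ∑ k : Fin N, (expVal (Hyb ((k:ℕ)+1)) f - expVal (Hyb (k:ℕ)) f) :=
          (Fin.sum_univ_eq_sum_range (fun m => expVal (Hyb (m+1)) f - expVal (Hyb m) f) N).symm
      _ = ∑ k : Fin N, expVal (Function.update (Hyb (k:ℕ)) k (q k - p k)) f := by
          apply Finset.sum_congr rfl
          intro k _
          rw [expVal_update_sub, ← hstep2 k]
          have : expVal (Hyb (k:ℕ)) f = expVal (Function.update (Hyb (k:ℕ)) k (p k)) f := by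
            conv_lhs => rw [hself k]
          rw [this]
  -- potential lift
  have hlift : ∀ (w : Fin N → A → ℝ) (k : Fin N),
      expVal (Function.update w k (q k - p k)) Φ
        = expVal (Function.update w k (q k - p k)) (u k) := by
    intro w k
    have hinvf : ∀ (a : Fin N → A) (z : A),
        (fun a => Φ a - u k a) (Function.update a k z) = Φ a - u k a := by
      intro a z
      have := hpot k a z
      simp only
      linarith
    have hvz : ∑ b, (q k - p k) b = 0 := by
      simp only [Pi.sub_apply]
      rw [Finset.sum_sub_distrib, hqsum k, hpsum k]; ring
    have h0 : expVal (Function.update w k (q k - p k)) (fun a => Φ a - u k a) = 0 := by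
      rw [expVal_update_invariant_factor w k (q k - p k) (p k) (hpsum k) _ hinvf]
      rw [hvz, zero_mul]
    have h1 := expVal_sub (Function.update w k (q k - p k)) Φ (u k)
    rw [h1] at h0
    linarith
  -- the main term
  have hmainterm : ∀ k, expVal (Function.update p k (q k - p k)) (u k)
      = ∑ b, (q k b - p k b) * r k b := by
    intro k
    rw [expVal_update_expand p k (q k - p k) (u k)]
    apply Finset.sum_congr rfl
    intro b _
    simp only [Pi.sub_apply]
    rfl
  set Err : Fin N → ℝ := fun k =>
    expVal (Function.update (Hyb (k:ℕ)) k (q k - p k)) (u k)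
      - expVal (Function.update p k (q k - p k)) (u k) with hErrdef
  -- the decomposition of the potential difference
  have hdecomp : expVal q Φ - expVal p Φ
      = (∑ k, (∑ b, (q k b - p k b) * r k b)) + ∑ k, Err k := by
    rw [htel Φ, ← Finset.sum_add_distrib]
    apply Finset.sum_congr rfl
    intro k _
    rw [hlift (Hyb (k:ℕ)) k, hErrdef]
    simp only
    rw [hmainterm k]
    ring
  -- √N bound on the error
  have hErrbound : ∀ k : Fin N, |Err k| ≤ Real.sqrt (Jk k) * Real.sqrt Jtot := by
    intro k
    have hGinv : ∀ (a : Fin N → A) (z : A),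
        (∏ j ∈ univ.erase k, Hyb (k:ℕ) j (Function.update a k z j))
          = ∏ j ∈ univ.erase k, Hyb (k:ℕ) j (a j) := fun a z => erase_prod_invariant _ k a z
    have hGpinv : ∀ (a : Fin N → A) (z : A),
        (∏ j ∈ univ.erase k, p j (Function.update a k z j))
          = ∏ j ∈ univ.erase k, p j (a j) := fun a z => erase_prod_invariant _ k a z
    have hvsum : ∑ b, (q k b - p k b) = 0 := by
      rw [Finset.sum_sub_distrib, hqsum k, hpsum k]; ring
    have hstep_i : Err k = ∑ a : Fin N → A, (q k (a k) - p k (a k)) *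
        (((∏ j ∈ univ.erase k, Hyb (k:ℕ) j (a j)) - ∏ j ∈ univ.erase k, p j (a j)) * u k a) := by
      rw [hErrdef]
      simp only
      rw [expVal_update (Hyb (k:ℕ)) k (q k - p k) (u k), expVal_update p k (q k - p k) (u k),
        ← Finset.sum_sub_distrib]
      apply Finset.sum_congr rfl
      intro a _
      simp only [Pi.sub_apply]
      ring
    have hhalfG : ∑ a : Fin N → A, (q k (a k) - p k (a k)) *
        ((∏ j ∈ univ.erase k, Hyb (k:ℕ) j (a j)) * (1/2)) = 0 := by
      have := sum_factor_invariant (fun b => q k b - p k b) (p k) (hpsum k) k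
        (fun a => (∏ j ∈ univ.erase k, Hyb (k:ℕ) j (a j)) * (1/2))
        (fun a z => by rw [hGinv a z])
      rw [this, hvsum, zero_mul]
    have hhalfGp : ∑ a : Fin N → A, (q k (a k) - p k (a k)) *
        ((∏ j ∈ univ.erase k, p j (a j)) * (1/2)) = 0 := by
      have := sum_factor_invariant (fun b => q k b - p k b) (p k) (hpsum k) k
        (fun a => (∏ j ∈ univ.erase k, p j (a j)) * (1/2))
        (fun a z => by rw [hGpinv a z])
      rw [this, hvsum, zero_mul]
    have hstep_iii : Err k = ∑ a : Fin N → A, (q k (a k) - p k (a k)) *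
        (((∏ j ∈ univ.erase k, Hyb (k:ℕ) j (a j)) - ∏ j ∈ univ.erase k, p j (a j))
          * (u k a - 1/2)) := by
      rw [hstep_i]
      have hsplit : ∀ a : Fin N → A, (q k (a k) - p k (a k)) *
          (((∏ j ∈ univ.erase k, Hyb (k:ℕ) j (a j)) - ∏ j ∈ univ.erase k, p j (a j)) * u k a)
        = (q k (a k) - p k (a k)) *
          (((∏ j ∈ univ.erase k, Hyb (k:ℕ) j (a j)) - ∏ j ∈ univ.erase k, p j (a j))
            * (u k a - 1/2))
          + ((q k (a k) - p k (a k)) * ((∏ j ∈ univ.erase k, Hyb (k:ℕ) j (a j)) * (1/2))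
          - (q k (a k) - p k (a k)) * ((∏ j ∈ univ.erase k, p j (a j)) * (1/2))) := by
        intro a; ring
      rw [Finset.sum_congr rfl (fun a _ => hsplit a), Finset.sum_add_distrib,
        Finset.sum_sub_distrib, hhalfG, hhalfGp]
      ring
    have hstep_iv : |Err k| ≤ (1/2) * ∑ a : Fin N → A, |q k (a k) - p k (a k)| *
        |(∏ j ∈ univ.erase k, Hyb (k:ℕ) j (a j)) - ∏ j ∈ univ.erase k, p j (a j)| := by
      rw [hstep_iii]
      calc |∑ a : Fin N → A, (q k (a k) - p k (a k)) *
            (((∏ j ∈ univ.erase k, Hyb (k:ℕ) j (a j)) - ∏ j ∈ univ.erase k, p j (a j))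
              * (u k a - 1/2))|
          ≤ ∑ a : Fin N → A, |(q k (a k) - p k (a k)) *
            (((∏ j ∈ univ.erase k, Hyb (k:ℕ) j (a j)) - ∏ j ∈ univ.erase k, p j (a j))
              * (u k a - 1/2))| := Finset.abs_sum_le_sum_abs _ _
        _ ≤ ∑ a : Fin N → A, |q k (a k) - p k (a k)| *
            (|(∏ j ∈ univ.erase k, Hyb (k:ℕ) j (a j)) - ∏ j ∈ univ.erase k, p j (a j)| * (1/2)) := by
            apply Finset.sum_le_sum
            intro a _
            rw [abs_mul, abs_mul]
            have h1 : |u k a - 1/2| ≤ 1/2 := by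
              obtain ⟨h2, h3⟩ := hu k a
              rw [abs_le]
              constructor <;> linarith
            exact mul_le_mul_of_nonneg_left
              (mul_le_mul_of_nonneg_left h1 (abs_nonneg _)) (abs_nonneg _)
        _ = (1/2) * ∑ a : Fin N → A, |q k (a k) - p k (a k)| *
            |(∏ j ∈ univ.erase k, Hyb (k:ℕ) j (a j)) - ∏ j ∈ univ.erase k, p j (a j)| := by
            rw [Finset.mul_sum]
            apply Finset.sum_congr rfl
            intro a _
            ring
    have hsplitD : ∑ a : Fin N → A, |q k (a k) - p k (a k)| *
        |(∏ j ∈ univ.erase k, Hyb (k:ℕ) j (a j)) - ∏ j ∈ univ.erase k, p j (a j)|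
      = (∑ b, |q k b - p k b|) * ∑ a : Fin N → A, p k (a k) *
        |(∏ j ∈ univ.erase k, Hyb (k:ℕ) j (a j)) - ∏ j ∈ univ.erase k, p j (a j)| :=
      sum_factor_invariant (fun b => |q k b - p k b|) (p k) (hpsum k) k
        (fun a => |(∏ j ∈ univ.erase k, Hyb (k:ℕ) j (a j)) - ∏ j ∈ univ.erase k, p j (a j)|)
        (fun a z => by rw [hGinv a z, hGpinv a z])
    have hDeq : ∑ a : Fin N → A, p k (a k) *
        |(∏ j ∈ univ.erase k, Hyb (k:ℕ) j (a j)) - ∏ j ∈ univ.erase k, p j (a j)|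
      = ∑ a : Fin N → A, |jointPmf (Function.update (Hyb (k:ℕ)) k (p k)) a - jointPmf p a| := by
      apply Finset.sum_congr rfl
      intro a _
      have h1 : jointPmf (Function.update (Hyb (k:ℕ)) k (p k)) a
          = p k (a k) * ∏ j ∈ univ.erase k, Hyb (k:ℕ) j (a j) :=
        prod_update_split (Hyb (k:ℕ)) k (p k) a
      have h2 : jointPmf p a = p k (a k) * ∏ j ∈ univ.erase k, p j (a j) :=
        (Finset.mul_prod_erase univ (fun j => p j (a j)) (mem_univ k)).symm
      rw [h1, h2, ← mul_sub, abs_mul, abs_of_nonneg (hppos k (a k)).le]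
    have hWpos : ∀ (j : Fin N) (b : A), 0 < (Function.update (Hyb (k:ℕ)) k (p k)) j b := by
      intro j b
      by_cases hj : j = k
      · rw [hj, Function.update_self]; exact hppos k b
      · rw [Function.update_of_ne hj]; exact hHybpos _ j b
    have hWsum : ∀ j : Fin N, ∑ b, (Function.update (Hyb (k:ℕ)) k (p k)) j b = 1 := by
      intro j
      by_cases hj : j = k
      · rw [hj, Function.update_self]; exact hpsum k
      · rw [Function.update_of_ne hj]; exact hHybsum _ j
    have hDbound : ∑ a : Fin N → A, |jointPmf (Function.update (Hyb (k:ℕ)) k (p k)) a - jointPmf p a|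
        ≤ Real.sqrt (2 * Jtot) := by
      have hWjpos : ∀ a : Fin N → A, 0 < jointPmf (Function.update (Hyb (k:ℕ)) k (p k)) a :=
        fun a => Finset.prod_pos (fun j _ => hWpos j (a j))
      have hpjpos : ∀ a : Fin N → A, 0 < jointPmf p a :=
        fun a => Finset.prod_pos (fun j _ => hppos j (a j))
      have hWjsum : ∑ a : Fin N → A, jointPmf (Function.update (Hyb (k:ℕ)) k (p k)) a = 1 := by
        unfold jointPmf
        rw [sum_prod_eq]
        exact Finset.prod_eq_one (fun j _ => hWsum j)
      have hpjsum : ∑ a : Fin N → A, jointPmf p a = 1 := by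
        unfold jointPmf
        rw [sum_prod_eq]
        exact Finset.prod_eq_one (fun j _ => hpsum j)
      rw [Real.le_sqrt (Finset.sum_nonneg (fun a _ => abs_nonneg _))
        (by linarith : (0:ℝ) ≤ 2 * Jtot)]
      calc (∑ a : Fin N → A, |jointPmf (Function.update (Hyb (k:ℕ)) k (p k)) a - jointPmf p a|)^2
          ≤ 2 * ∑ a : Fin N → A, (jointPmf (Function.update (Hyb (k:ℕ)) k (p k)) a - jointPmf p a)
              * (Real.log (jointPmf (Function.update (Hyb (k:ℕ)) k (p k)) a)
                - Real.log (jointPmf p a)) :=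
            l1_sq_le_two_jeffrey _ _ hWjpos hpjpos hWjsum hpjsum
        _ = 2 * ∑ j, ∑ b, ((Function.update (Hyb (k:ℕ)) k (p k)) j b - p j b)
              * (Real.log ((Function.update (Hyb (k:ℕ)) k (p k)) j b) - Real.log (p j b)) := by
            rw [jeffrey_additivity _ p hWpos hWsum hppos hpsum]
        _ ≤ 2 * Jtot := by
            have hj : ∀ j : Fin N, (∑ b, ((Function.update (Hyb (k:ℕ)) k (p k)) j b - p j b)
                * (Real.log ((Function.update (Hyb (k:ℕ)) k (p k)) j b) - Real.log (p j b)))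
                ≤ Jk j := by
              intro j
              by_cases hjk : j = k
              · have hup : ∀ b : A, (Function.update (Hyb (k:ℕ)) k (p k)) j b = p j b := by
                  intro b; rw [hjk, Function.update_self]
                have hz : (∑ b, ((Function.update (Hyb (k:ℕ)) k (p k)) j b - p j b)
                    * (Real.log ((Function.update (Hyb (k:ℕ)) k (p k)) j b) - Real.log (p j b))) = 0 :=
                  Finset.sum_eq_zero (fun b _ => by rw [hup b]; ring)
                rw [hz]; exact hJk_nonneg j
              · have hup : ∀ b : A, (Function.update (Hyb (k:ℕ)) k (p k)) j b = Hyb (k:ℕ) j b :=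
                  fun b => by rw [Function.update_of_ne hjk]
                have hrw : (∑ b, ((Function.update (Hyb (k:ℕ)) k (p k)) j b - p j b)
                    * (Real.log ((Function.update (Hyb (k:ℕ)) k (p k)) j b) - Real.log (p j b)))
                  = ∑ b, (Hyb (k:ℕ) j b - p j b) * (Real.log (Hyb (k:ℕ) j b) - Real.log (p j b)) :=
                  Finset.sum_congr rfl (fun b _ => by rw [hup b])
                rw [hrw]
                by_cases h2 : (j:ℕ) < (k:ℕ)
                · have he : Hyb (k:ℕ) j = q j := by simp [hHybdef, h2]
                  rw [he]
                · have he : Hyb (k:ℕ) j = p j := by simp [hHybdef, h2]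
                  rw [he, Finset.sum_eq_zero (fun b (_ : b ∈ univ) => by ring)]
                  exact hJk_nonneg j
            have := Finset.sum_le_sum (fun j (_ : j ∈ univ) => hj j)
            rw [← hJtotdef] at this
            linarith
    have hdk : (∑ b, |q k b - p k b|) ≤ Real.sqrt (2 * Jk k) := by
      rw [Real.le_sqrt (Finset.sum_nonneg (fun b _ => abs_nonneg _))
        (by linarith [hJk_nonneg k] : (0:ℝ) ≤ 2 * Jk k)]
      calc (∑ b, |q k b - p k b|)^2
          ≤ 2 * ∑ b, (q k b - p k b) * (Real.log (q k b) - Real.log (p k b)) :=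
            l1_sq_le_two_jeffrey (q k) (p k) (hqpos k) (hppos k) (hqsum k) (hpsum k)
        _ = 2 * Jk k := by rw [hJkdef]
    have hdknn : 0 ≤ ∑ b, |q k b - p k b| := Finset.sum_nonneg (fun b _ => abs_nonneg _)
    calc |Err k| ≤ (1/2) * ∑ a : Fin N → A, |q k (a k) - p k (a k)| *
          |(∏ j ∈ univ.erase k, Hyb (k:ℕ) j (a j)) - ∏ j ∈ univ.erase k, p j (a j)| := hstep_iv
      _ = (1/2) * ((∑ b, |q k b - p k b|) * ∑ a : Fin N → A,
          |jointPmf (Function.update (Hyb (k:ℕ)) k (p k)) a - jointPmf p a|) := by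
          rw [hsplitD, hDeq]
      _ ≤ (1/2) * (Real.sqrt (2 * Jk k) * Real.sqrt (2 * Jtot)) := by
          apply mul_le_mul_of_nonneg_left _ (by norm_num : (0:ℝ) ≤ 1/2)
          exact mul_le_mul hdk hDbound (Finset.sum_nonneg (fun a _ => abs_nonneg _))
            (Real.sqrt_nonneg _)
      _ = Real.sqrt (Jk k) * Real.sqrt Jtot := by
          rw [Real.sqrt_mul (by norm_num : (0:ℝ) ≤ 2) (Jk k),
            Real.sqrt_mul (by norm_num : (0:ℝ) ≤ 2) Jtot]
          rw [show (1/2 : ℝ) * (Real.sqrt 2 * Real.sqrt (Jk k) * (Real.sqrt 2 * Real.sqrt Jtot))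
            = (Real.sqrt 2 * Real.sqrt 2) * ((1/2) * (Real.sqrt (Jk k) * Real.sqrt Jtot)) from by
              ring]
          rw [Real.mul_self_sqrt (by norm_num : (0:ℝ) ≤ 2)]
          ring
  have hErr_sqrtN : -(Real.sqrt N * Jtot) ≤ ∑ k, Err k := by
    have hsumsq : (∑ k, Real.sqrt (Jk k)) ≤ Real.sqrt N * Real.sqrt Jtot := by
      have hcs := sum_mul_sq_le_sq_mul_sq Finset.univ (fun _ : Fin N => (1:ℝ))
        (fun k => Real.sqrt (Jk k))
      simp only [one_pow, one_mul] at hcs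
      have h1 : ∑ _k : Fin N, (1:ℝ) = N := by simp
      have h2 : ∑ k, (Real.sqrt (Jk k))^2 = Jtot := by
        rw [hJtotdef]
        exact Finset.sum_congr rfl fun k _ => Real.sq_sqrt (hJk_nonneg k)
      rw [h1, h2] at hcs
      have h3 : (∑ k, Real.sqrt (Jk k)) ≤ Real.sqrt ((N:ℝ) * Jtot) := by
        rw [Real.le_sqrt (Finset.sum_nonneg fun k _ => Real.sqrt_nonneg _) (by positivity)]
        exact hcs
      rwa [Real.sqrt_mul (Nat.cast_nonneg N)] at h3
    have hlow : -(∑ k, |Err k|) ≤ ∑ k, Err k := by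
      have h := Finset.sum_le_sum (fun k (_ : k ∈ (univ : Finset (Fin N))) => neg_abs_le (Err k))
      rw [Finset.sum_neg_distrib] at h
      exact h
    have h5 : ∑ k, |Err k| ≤ Real.sqrt N * Jtot := by
      calc ∑ k, |Err k| ≤ ∑ k, Real.sqrt (Jk k) * Real.sqrt Jtot :=
            Finset.sum_le_sum (fun k _ => hErrbound k)
        _ = (∑ k, Real.sqrt (Jk k)) * Real.sqrt Jtot := by rw [Finset.sum_mul]
        _ ≤ (Real.sqrt N * Real.sqrt Jtot) * Real.sqrt Jtot :=
            mul_le_mul_of_nonneg_right hsumsq (Real.sqrt_nonneg _)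
        _ = Real.sqrt N * Jtot := by rw [mul_assoc, Real.mul_self_sqrt hJtot_nonneg]
    linarith
  -- 2Φmax bound on the error
  have hΦmax0 : 0 ≤ Φmax := by
    have h := hΦ (fun _ => Classical.arbitrary A)
    linarith [h.1, h.2]
  have hErr_phimax : -(2 * Φmax * Jtot) ≤ ∑ k, Err k := by
    have hErrPhi : ∀ k, Err k = expVal (Function.update (Hyb (k:ℕ)) k (q k - p k)) Φ
        - expVal (Function.update p k (q k - p k)) Φ := by
      intro k
      rw [hErrdef]
      simp only
      rw [hlift (Hyb (k:ℕ)) k, hlift p k]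
    have hEJ : ∑ k, Err k = (expVal q Φ - expVal p Φ)
        - ∑ k : Fin N, expVal (Function.update p k (q k - p k)) Φ := by
      rw [Finset.sum_congr rfl (fun k _ => hErrPhi k), Finset.sum_sub_distrib, ← htel Φ]
    have hSE : ∑ k : Fin N, expVal (Function.update p k (q k - p k)) Φ
        = ∑ a : Fin N → A, (∑ k : Fin N, (q k (a k) - p k (a k))
            * ∏ j ∈ univ.erase k, p j (a j)) * Φ a := by
      rw [Finset.sum_congr rfl (fun k (_ : k ∈ univ) => expVal_update p k (q k - p k) Φ)]
      rw [Finset.sum_comm]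
      apply Finset.sum_congr rfl
      intro a _
      rw [Finset.sum_mul]
      apply Finset.sum_congr rfl
      intro k _
      simp only [Pi.sub_apply]
      ring
    have hEJ2 : ∑ k, Err k = ∑ a : Fin N → A,
        (jointPmf q a - jointPmf p a
          - ∑ k : Fin N, (q k (a k) - p k (a k)) * ∏ j ∈ univ.erase k, p j (a j)) * Φ a := by
      rw [hEJ, hSE]
      unfold expVal
      rw [← Finset.sum_sub_distrib, ← Finset.sum_sub_distrib]
      apply Finset.sum_congr rfl
      intro a _
      ring
    have hpoint : ∀ a : Fin N → A,
        -(2 * Φmax * (jointPmf p a * ∑ k, ((q k (a k) - p k (a k)) / p k (a k))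
            * (Real.log (q k (a k)) - Real.log (p k (a k)))))
        ≤ (jointPmf q a - jointPmf p a
            - ∑ k : Fin N, (q k (a k) - p k (a k)) * ∏ j ∈ univ.erase k, p j (a j)) * Φ a := by
      intro a
      set y : Fin N → ℝ := fun j => Real.log (q j (a j)) - Real.log (p j (a j)) with hy
      have hqp : ∀ j, q j (a j) = p j (a j) * Real.exp (y j) := by
        intro j
        show q j (a j) = p j (a j) * Real.exp (Real.log (q j (a j)) - Real.log (p j (a j)))
        rw [Real.exp_sub, Real.exp_log (hqpos j (a j)), Real.exp_log (hppos j (a j))]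
        rw [mul_div_assoc']
        rw [mul_comm (p j (a j)) (q j (a j)), mul_div_assoc,
          div_self (ne_of_gt (hppos j (a j))), mul_one]
      have hPpos : 0 < jointPmf p a := Finset.prod_pos (fun j _ => hppos j (a j))
      have hQ : jointPmf q a = jointPmf p a * Real.exp (∑ j, y j) := by
        unfold jointPmf
        rw [Real.exp_sum, ← Finset.prod_mul_distrib]
        exact Finset.prod_congr rfl (fun j _ => hqp j)
      have hSk : ∀ k : Fin N, (q k (a k) - p k (a k)) * ∏ j ∈ univ.erase k, p j (a j)
          = jointPmf p a * (Real.exp (y k) - 1) := by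
        intro k
        rw [hqp k]
        unfold jointPmf
        rw [← Finset.mul_prod_erase univ (fun j => p j (a j)) (mem_univ k)]
        ring
      have htk : ∀ k : Fin N, ((q k (a k) - p k (a k)) / p k (a k))
            * (Real.log (q k (a k)) - Real.log (p k (a k)))
          = (Real.exp (y k) - 1) * y k := by
        intro k
        have hyk : Real.log (q k (a k)) - Real.log (p k (a k)) = y k := rfl
        have h1 : (q k (a k) - p k (a k)) / p k (a k) = Real.exp (y k) - 1 := by
          have hpne : p k (a k) ≠ 0 := ne_of_gt (hppos k (a k))
          rw [hqp k]
          field_simp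
        rw [hyk, h1]
      have hG1sum : (∑ k, (Real.exp (y k) - 1)) - (∑ k, y k)
          ≤ 2 * ∑ k, ((Real.exp (y k) - 1) * y k) := by
        rw [← Finset.sum_sub_distrib, Finset.mul_sum]
        exact Finset.sum_le_sum (fun k _ => by have := g1_ineq (y k); linarith)
      have hYexp : (∑ k, y k) + 1 ≤ Real.exp (∑ k, y k) := Real.add_one_le_exp _
      have hT0 : 0 ≤ ∑ k, (Real.exp (y k) - 1) * y k :=
        Finset.sum_nonneg (fun k _ => exp_sub_one_mul_self_nonneg (y k))
      have hkey : -(2 * ∑ k, (Real.exp (y k) - 1) * y k)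
          ≤ Real.exp (∑ j, y j) - 1 - ∑ k, (Real.exp (y k) - 1) := by linarith
      have hΨeq : jointPmf q a - jointPmf p a
          - (∑ k : Fin N, (q k (a k) - p k (a k)) * ∏ j ∈ univ.erase k, p j (a j))
          = jointPmf p a * (Real.exp (∑ j, y j) - 1 - ∑ k, (Real.exp (y k) - 1)) := by
        rw [hQ, Finset.sum_congr rfl (fun k (_ : k ∈ univ) => hSk k), ← Finset.mul_sum]
        ring
      have hTsum : (∑ k, ((q k (a k) - p k (a k)) / p k (a k))
            * (Real.log (q k (a k)) - Real.log (p k (a k))))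
          = ∑ k, (Real.exp (y k) - 1) * y k := Finset.sum_congr rfl (fun k _ => htk k)
      obtain ⟨hΦa0, hΦa1⟩ := hΦ a
      rw [hTsum, hΨeq]
      rcases le_or_gt 0 (jointPmf p a
          * (Real.exp (∑ j, y j) - 1 - ∑ k, (Real.exp (y k) - 1))) with hsgn | hsgn
      · have hrhs : 0 ≤ (jointPmf p a
            * (Real.exp (∑ j, y j) - 1 - ∑ k, (Real.exp (y k) - 1))) * Φ a :=
          mul_nonneg hsgn hΦa0
        have hlhs0 : 0 ≤ 2 * Φmax * (jointPmf p a * ∑ k, (Real.exp (y k) - 1) * y k) := by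
          apply mul_nonneg (by linarith)
          exact mul_nonneg hPpos.le hT0
        linarith
      · have h1 : (jointPmf p a * (Real.exp (∑ j, y j) - 1 - ∑ k, (Real.exp (y k) - 1))) * Φmax
            ≤ (jointPmf p a * (Real.exp (∑ j, y j) - 1 - ∑ k, (Real.exp (y k) - 1))) * Φ a :=
          mul_le_mul_of_nonpos_left hΦa1 hsgn.le
        have h2 : -(2 * (jointPmf p a * ∑ k, (Real.exp (y k) - 1) * y k))
            ≤ jointPmf p a * (Real.exp (∑ j, y j) - 1 - ∑ k, (Real.exp (y k) - 1)) := by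
          calc -(2 * (jointPmf p a * ∑ k, (Real.exp (y k) - 1) * y k))
              = jointPmf p a * (-(2 * ∑ k, (Real.exp (y k) - 1) * y k)) := by ring
            _ ≤ jointPmf p a * (Real.exp (∑ j, y j) - 1 - ∑ k, (Real.exp (y k) - 1)) :=
                mul_le_mul_of_nonneg_left hkey hPpos.le
        have h3 : (-(2 * (jointPmf p a * ∑ k, (Real.exp (y k) - 1) * y k))) * Φmax
            ≤ (jointPmf p a * (Real.exp (∑ j, y j) - 1 - ∑ k, (Real.exp (y k) - 1))) * Φmax :=
          mul_le_mul_of_nonneg_right h2 hΦmax0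
        calc -(2 * Φmax * (jointPmf p a * ∑ k, (Real.exp (y k) - 1) * y k))
            = (-(2 * (jointPmf p a * ∑ k, (Real.exp (y k) - 1) * y k))) * Φmax := by ring
          _ ≤ (jointPmf p a * (Real.exp (∑ j, y j) - 1 - ∑ k, (Real.exp (y k) - 1))) * Φmax := h3
          _ ≤ _ := h1
    have hsumT : ∑ a : Fin N → A, jointPmf p a * (∑ k, ((q k (a k) - p k (a k)) / p k (a k))
          * (Real.log (q k (a k)) - Real.log (p k (a k)))) = Jtot := by
      have hswap : ∑ a : Fin N → A, jointPmf p a * (∑ k, ((q k (a k) - p k (a k)) / p k (a k))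
            * (Real.log (q k (a k)) - Real.log (p k (a k))))
          = ∑ k : Fin N, ∑ a : Fin N → A, jointPmf p a * (((q k (a k) - p k (a k)) / p k (a k))
            * (Real.log (q k (a k)) - Real.log (p k (a k)))) := by
        simp_rw [Finset.mul_sum]
        rw [Finset.sum_comm]
      rw [hswap]
      rw [hJtotdef]
      apply Finset.sum_congr rfl
      intro k _
      have hm := sum_prod_coord p k (fun b => ((q k b - p k b) / p k b)
        * (Real.log (q k b) - Real.log (p k b)))
      have hprod1 : ∏ j ∈ univ.erase k, (∑ b, p j b) = 1 :=
        Finset.prod_eq_one (fun j _ => hpsum j)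
      rw [hprod1, mul_one] at hm
      calc ∑ a : Fin N → A, jointPmf p a * (((q k (a k) - p k (a k)) / p k (a k))
            * (Real.log (q k (a k)) - Real.log (p k (a k)))) = ∑ b, p k b * (((q k b - p k b) / p k b)
            * (Real.log (q k b) - Real.log (p k b))) := hm
        _ = ∑ b, (q k b - p k b) * (Real.log (q k b) - Real.log (p k b)) := by
            apply Finset.sum_congr rfl
            intro b _
            have hpne : p k b ≠ 0 := ne_of_gt (hppos k b)
            field_simp
    have hfinal : ∑ a : Fin N → A, -(2 * Φmax * (jointPmf p a
          * ∑ k, ((q k (a k) - p k (a k)) / p k (a k))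
            * (Real.log (q k (a k)) - Real.log (p k (a k)))))
        = -(2 * Φmax * Jtot) := by
      have hc : ∀ a : Fin N → A, -(2 * Φmax * (jointPmf p a
            * ∑ k, ((q k (a k) - p k (a k)) / p k (a k))
              * (Real.log (q k (a k)) - Real.log (p k (a k)))))
          = (-(2 * Φmax)) * (jointPmf p a * ∑ k, ((q k (a k) - p k (a k)) / p k (a k))
              * (Real.log (q k (a k)) - Real.log (p k (a k)))) := fun a => by ring
      rw [Finset.sum_congr rfl (fun a _ => hc a), ← Finset.mul_sum, hsumT]
      ring
    rw [hEJ2, ← hfinal]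
    exact Finset.sum_le_sum (fun a _ => hpoint a)
  -- KL ≤ J per site
  have hKL_le : ∀ k, KLdiv (q k) (p k) ≤ Jk k := by
    intro k
    have hsplit : Jk k = KLdiv (q k) (p k) + KLdiv (p k) (q k) := by
      rw [hJkdef]
      simp only
      unfold KLdiv
      rw [← Finset.sum_add_distrib]
      apply Finset.sum_congr rfl
      intro b _
      ring
    have := gibbs_nonneg (p k) (q k) (hppos k) (hqpos k) (hpsum k) (hqsum k)
    have h2 : 0 ≤ KLdiv (p k) (q k) := this
    linarith
  -- final assembly
  have hent : ∑ k, ((∑ b, (q k b - p k b) * r k b) + τ * (entropy (q k) - entropy (p k)))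
      = (∑ k, ∑ b, (q k b - p k b) * r k b)
        + (τ * ∑ i, entropy (q i) - τ * ∑ i, entropy (p i)) := by
    rw [Finset.sum_add_distrib]
    congr 1
    rw [← Finset.mul_sum, Finset.sum_sub_distrib, mul_sub]
  have hreg : regPot Φ τ q - regPot Φ τ p
      = (∑ k, ((∑ b, (q k b - p k b) * r k b) + τ * (entropy (q k) - entropy (p k))))
        + ∑ k, Err k := by
    unfold regPot
    rw [hent]
    linarith [hdecomp]
  have hregval : regPot Φ τ q - regPot Φ τ p
      = (1/η) * Jtot - τ * (∑ k, KLdiv (q k) (p k)) + ∑ k, Err k := by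
    rw [hreg]
    rw [Finset.sum_congr rfl (fun k _ => hB k)]
    rw [Finset.sum_sub_distrib, ← Finset.mul_sum, ← Finset.mul_sum]
  have hKLsum : ∑ k, KLdiv (q k) (p k) ≤ Jtot :=
    Finset.sum_le_sum (fun k _ => hKL_le k)
  have hKLsum_nonneg : 0 ≤ ∑ k, KLdiv (q k) (p k) := by
    apply Finset.sum_nonneg
    intro k _
    exact gibbs_nonneg (q k) (p k) (hqpos k) (hppos k) (hqsum k) (hpsum k)
  have hmin_bound : -(min (Real.sqrt N) (2 * Φmax) * Jtot) ≤ ∑ k, Err k := by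
    rcases min_cases (Real.sqrt N) (2 * Φmax) with ⟨hmeq, _⟩ | ⟨hmeq, _⟩
    · rw [hmeq]; exact hErr_sqrtN
    · rw [hmeq]; exact hErr_phimax
  rw [ge_iff_le, hJdiv, hregval]
  have hτJ : τ * (∑ k, KLdiv (q k) (p k)) ≤ τ * Jtot :=
    mul_le_mul_of_nonneg_left hKLsum hτ.le
  nlinarith [hmin_bound, hτJ]
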